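/- Let I_Q : ℝ → [0,∞] be convex and lower semicontinuous with I_Q(s) = ∞ for s < 0, and let q_Q = I_Q^* be its Legendre–Fenchel transform. Define I_W(s) := ∞ for s < 0 and I_W(s) := inf_{r ≥ s}(r - s + I_Q(r)) for s ≥ 0. Then the Legendre–Fenchel transform of I_W satisfies I_W^*(α) = max{q_Q(α), q_Q(-1)} for every α ∈ ℝ. -/
import Mathlib


open MeasureTheory Filter Set
open scoped ENNReal

namespace RT

variable {A : Type*}

/-- The left shift on one-sided sequences. -/
def shift (x : ℕ → A) : ℕ → A := fun n => x (n + 1)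

/-- The cylinder set of a finite word. -/
def cyl {n : ℕ} (u : Fin n → A) : Set (ℕ → A) := {x | ∀ i : Fin n, x i = u i}

/-- Cylinder probability `P_n(u) = P([u])`. -/
noncomputable def cylP [MeasurableSpace A] (P : Measure (ℕ → A)) {n : ℕ}
    (u : Fin n → A) : ℝ := (P (cyl u)).toReal

/-- Events depending only on the first `n` coordinates. -/
def FnSet (n : ℕ) (s : Set (ℕ → A)) : Prop :=
  ∃ S : Set (Fin n → A), s = {x | (fun i : Fin n => x i) ∈ S}

/-- Waiting time `W_n(u,y)`, with value `⊤` if `u` never occurs in `y`. -/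
noncomputable def waitTime {n : ℕ} (u : Fin n → A) (y : ℕ → A) : ℕ∞ :=
  sInf {m : ℕ∞ | ∃ j : ℕ, m = (j : ℕ∞) + 1 ∧ ∀ i : Fin n, y (j + (i : ℕ)) = u i}

/-- Return time `R_n(x)`. -/
noncomputable def returnTime (n : ℕ) (x : ℕ → A) : ℕ∞ :=
  sInf {m : ℕ∞ | ∃ k : ℕ, m = (k : ℕ∞) + 1 ∧ ∀ i : Fin n, x (k + 1 + (i : ℕ)) = x i}

/-- Nonoverlapping return time `V_n(x)`. -/
noncomputable def vTime (n : ℕ) (x : ℕ → A) : ℕ∞ :=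
  sInf {m : ℕ∞ | ∃ k : ℕ, m = (k : ℕ∞) + 1 ∧ ∀ i : Fin n, x (n + k + (i : ℕ)) = x i}

/-- Extended logarithm, with `elog 0 = ⊥` and `elog ⊤ = ⊤`. -/
noncomputable def elog (x : ℝ≥0∞) : EReal :=
  if x = 0 then ⊥ else if x = ⊤ then ⊤ else ((Real.log x.toReal : ℝ) : EReal)

/-- Periodic extension of a word of positive length. -/
def perExt {m : ℕ} (hm : 0 < m) (w : Fin m → A) : ℕ → A :=
  fun i => w ⟨i % m, Nat.mod_lt i hm⟩

/-- The cylinder determined by the first `m` values of `f`. -/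
def cylOf (m : ℕ) (f : ℕ → A) : Set (ℕ → A) := {x | ∀ i < m, x i = f i}

/-- Upper decoupling in event form. -/
def UDE [MeasurableSpace A] (P : Measure (ℕ → A)) (τ : ℕ → ℕ) (C : ℕ → ℝ) : Prop :=
  ∀ n : ℕ, 0 < n → ∀ s : Set (ℕ → A), FnSet n s → ∀ B : Set (ℕ → A), MeasurableSet B →
    (P (s ∩ (shift^[n + τ n]) ⁻¹' B)).toReal ≤ C n * (P s).toReal * (P B).toReal

/-- Selective lower decoupling in event form. -/
def SLDE [MeasurableSpace A] (P : Measure (ℕ → A)) (τ : ℕ → ℕ) (C : ℕ → ℝ) : Prop :=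
  ∀ n : ℕ, 0 < n → ∀ s : Set (ℕ → A), FnSet n s → ∀ B : Set (ℕ → A), MeasurableSet B →
    ∃ ℓ ≤ τ n, (C n)⁻¹ * (P s).toReal * (P B).toReal ≤ (P (s ∩ (shift^[n + ℓ]) ⁻¹' B)).toReal

/-- Upper decoupling (word form). -/
def UD [MeasurableSpace A] (P : Measure (ℕ → A)) (τ : ℕ → ℕ) (C : ℕ → ℝ) : Prop :=
  ∀ (n m : ℕ), 0 < n → 0 < m → ∀ (u : Fin n → A) (v : Fin m → A) (ξ : Fin (τ n) → A),
    cylP P (Fin.append (Fin.append u ξ) v) ≤ C n * cylP P u * cylP P v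

/-- Selective lower decoupling (word form). -/
def SLD [MeasurableSpace A] (P : Measure (ℕ → A)) (τ : ℕ → ℕ) (C : ℕ → ℝ) : Prop :=
  ∀ (n m : ℕ), 0 < n → 0 < m → ∀ (u : Fin n → A) (v : Fin m → A),
    ∃ ℓ ≤ τ n, ∃ ξ : Fin ℓ → A,
      (C n)⁻¹ * cylP P u * cylP P v ≤ cylP P (Fin.append (Fin.append u ξ) v)

/-- Period of a finite word. -/
noncomputable def wordPeriod {m : ℕ} (u : Fin m → A) : ℕ :=
  sInf {p : ℕ | 1 ≤ p ∧ ∀ (i : ℕ) (h : i + p < m), u ⟨i, by omega⟩ = u ⟨i + p, h⟩}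

/-- Legendre–Fenchel transform of an `EReal`-valued function on `ℝ`. -/
noncomputable def LF (f : ℝ → EReal) (α : ℝ) : EReal := ⨆ s : ℝ, ((α * s : ℝ) : EReal) - f s

/-- The waiting-time rate function built from `IQ`. -/
noncomputable def IW (IQ : ℝ → EReal) (s : ℝ) : EReal :=
  if s < 0 then ⊤ else ⨅ r : {r : ℝ // s ≤ r}, ((r.1 - s : ℝ) : EReal) + IQ r.1

lemma sub_iInf_le' {ι : Sort*} [Nonempty ι] (a : ℝ) (f : ι → EReal)
    (hf : ∀ i, 0 ≤ f i) {M : EReal} (h : ∀ i, (a : EReal) - f i ≤ M) :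
    (a : EReal) - ⨅ i, f i ≤ M := by
  by_contra hM
  push_neg at hM
  have hct : (⨅ i, f i) ≠ ⊤ := by
    intro hc; rw [hc, EReal.sub_top] at hM; exact not_lt_bot hM
  have hcb : (⨅ i, f i) ≠ ⊥ := by
    intro hc
    have := le_iInf hf
    rw [hc] at this
    simp at this
  set x := (⨅ i, f i).toReal with hxdef
  have hx : (⨅ i, f i) = (x : EReal) := (EReal.coe_toReal hct hcb).symm
  rw [hx, ← EReal.coe_sub] at hM
  obtain ⟨z, hMz, hz⟩ := EReal.lt_iff_exists_real_btwn.mp hM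
  have hz' : z < a - x := by exact_mod_cast hz
  have hlt : (⨅ i, f i) < ((a - z : ℝ) : EReal) := by
    rw [hx]; exact_mod_cast (by linarith : x < a - z)
  obtain ⟨i, hi⟩ := iInf_lt_iff.mp hlt
  have hib : f i ≠ ⊥ := by
    intro hb; have := hf i; rw [hb] at this; simp at this
  have hit : f i ≠ ⊤ := by intro ht; rw [ht] at hi; exact not_top_lt hi
  have ht : f i = ((f i).toReal : EReal) := (EReal.coe_toReal hit hib).symm
  set t := (f i).toReal
  rw [ht] at hi
  have ht' : t < a - z := by exact_mod_cast hi
  have h2 := h i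
  rw [ht, ← EReal.coe_sub] at h2
  have h3 : ((a - t : ℝ) : EReal) < (z : EReal) := lt_of_le_of_lt h2 hMz
  have : a - t < z := by exact_mod_cast h3
  linarith

lemma coe_sub_add' (a b : ℝ) {c : EReal} (hc : c ≠ ⊥) :
    (a : EReal) - ((b : EReal) + c) = ((a - b : ℝ) : EReal) - c := by
  induction c using EReal.rec with
  | bot => exact absurd rfl hc
  | top => rw [EReal.coe_add_top, EReal.sub_top, EReal.sub_top]
  | coe t =>
    rw [← EReal.coe_add, ← EReal.coe_sub, ← EReal.coe_sub]
    norm_cast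
    ring

/-- With `I_Q` convex, lower semicontinuous, nonnegative and infinite on
`(-∞,0)`, and `q_Q = I_Q^*`, the Legendre–Fenchel transform of the waiting-time
rate function `I_W` satisfies `I_W^*(α) = max{q_Q(α), q_Q(-1)}` for every `α ∈ ℝ`. -/
theorem stmt9 (IQ : ℝ → EReal)
    (hnn : ∀ s, 0 ≤ IQ s)
    (hlsc : LowerSemicontinuous IQ)
    (hconv : ∀ (l s₁ s₂ : ℝ), 0 ≤ l → l ≤ 1 →
      IQ (l * s₁ + (1 - l) * s₂) ≤ (l : EReal) * IQ s₁ + ((1 - l : ℝ) : EReal) * IQ s₂)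
    (hneg : ∀ s : ℝ, s < 0 → IQ s = ⊤) :
    ∀ α : ℝ, LF (IW IQ) α = max (LF IQ α) (LF IQ (-1)) := by
  intro α
  have hIQbot : ∀ r : ℝ, IQ r ≠ ⊥ := by
    intro r hb; have := hnn r; rw [hb] at this; simp at this
  apply le_antisymm
  · -- LF (IW IQ) α ≤ max ...
    apply iSup_le
    intro s
    by_cases hs : s < 0
    · rw [IW, if_pos hs, EReal.sub_top]
      exact bot_le
    · push_neg at hs
      rw [IW, if_neg (not_lt.mpr hs)]
      haveI : Nonempty {r : ℝ // s ≤ r} := ⟨⟨s, le_rfl⟩⟩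
      apply sub_iInf_le' (α * s)
      · rintro ⟨r, hsr⟩
        have h1 : (0 : EReal) ≤ ((r - s : ℝ) : EReal) := by
          exact_mod_cast (by linarith : (0:ℝ) ≤ r - s)
        exact add_nonneg h1 (hnn r)
      · rintro ⟨r, hsr⟩
        rw [coe_sub_add' _ _ (hIQbot r)]
        by_cases hα : 0 ≤ α + 1
        · refine le_trans ?_ (le_trans (le_iSup (fun u => ((α * u : ℝ) : EReal) - IQ u) r) (le_max_left _ _))
          apply EReal.sub_le_sub _ le_rfl
          exact_mod_cast (by nlinarith : α * s - (r - s) ≤ α * r)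
        · push_neg at hα
          refine le_trans ?_ (le_trans (le_iSup (fun u => (((-1) * u : ℝ) : EReal) - IQ u) r) (le_max_right _ _))
          apply EReal.sub_le_sub _ le_rfl
          exact_mod_cast (by nlinarith : α * s - (r - s) ≤ (-1) * r)
  · apply max_le
    · -- LF IQ α ≤ LF (IW IQ) α
      apply iSup_le
      intro s
      by_cases hs : s < 0
      · rw [hneg s hs, EReal.sub_top]
        exact bot_le
      · push_neg at hs
        have hIW : IW IQ s ≤ IQ s := by
          rw [IW, if_neg (not_lt.mpr hs)]
          refine le_trans (iInf_le _ ⟨s, le_rfl⟩) ?_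
          simp
        refine le_trans (EReal.sub_le_sub le_rfl hIW) ?_
        exact le_iSup (fun u => ((α * u : ℝ) : EReal) - IW IQ u) s
    · -- LF IQ (-1) ≤ LF (IW IQ) α
      apply iSup_le
      intro r
      by_cases hr : r < 0
      · rw [hneg r hr, EReal.sub_top]
        exact bot_le
      · push_neg at hr
        haveI : Nonempty {u : ℝ // (0:ℝ) ≤ u} := ⟨⟨0, le_rfl⟩⟩
        have h1 : IW IQ 0 ≤ ((r - 0 : ℝ) : EReal) + IQ r := by
          rw [IW, if_neg (lt_irrefl 0)]
          exact iInf_le _ (⟨r, hr⟩ : {u : ℝ // (0:ℝ) ≤ u})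
        have h2 : ((α * 0 : ℝ) : EReal) - (((r - 0 : ℝ) : EReal) + IQ r) ≤
            ((α * 0 : ℝ) : EReal) - IW IQ 0 := EReal.sub_le_sub le_rfl h1
        rw [coe_sub_add' _ _ (hIQbot r)] at h2
        have h3 : ((-1) * r : ℝ) = α * 0 - (r - 0) := by ring
        rw [h3]
        exact le_trans h2 (le_iSup (fun u => ((α * u : ℝ) : EReal) - IW IQ u) 0)

end RT
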